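/- Let T be a Hadamard space and L a finite weighted graph with vertex weights m(y) > 0 and edge weights m(y,y') > 0 satisfying m(y) = Σ_{y'∼y} m(y,y'). Then (1 − δ(T))·μ_1(L) ≤ λ_1(L, T) ≤ μ_1(L), where μ_1(L) is the first nonzero eigenvalue of the weighted graph Laplacian and λ_1(L,T) = inf over nonconstant maps φ : L(0) → T of [½ Σ_{(y,z) edges} m(y,z) d_T(φ(y),φ(z))²] / [Σ_y m(y) d_T(φ̄, φ(y))²], with φ̄ the barycenter of {φ(y)} with weights m(y)/m. In particular, if δ(T) = 0 then λ_1(L,T) = μ_1(L). -/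

import Mathlib

open Filter Metric Set Topology

/-- A Hadamard space: a complete metric space with midpoints satisfying the CN
(comparison) inequality of CAT(0) geometry. -/
class HadamardSpace (Y : Type*) [MetricSpace Y] : Prop where
  complete : CompleteSpace Y
  midpoints : ∀ x y : Y, ∃ m : Y, dist x m = dist x y / 2 ∧ dist m y = dist x y / 2
  cn : ∀ x y z m : Y, dist y m = dist y z / 2 → dist m z = dist y z / 2 →
    dist x m ^ 2 ≤ dist x y ^ 2 / 2 + dist x z ^ 2 / 2 - dist y z ^ 2 / 4

/-- `b` is the barycenter of the points `v` with weights `t`: it minimizes the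
weighted sum of squared distances. -/
def IsWBarycenter {T : Type*} [MetricSpace T] {ι : Type*} [Fintype ι]
    (b : T) (v : ι → T) (t : ι → ℝ) : Prop :=
  ∀ q : T, ∑ i, t i * dist (v i) b ^ 2 ≤ ∑ i, t i * dist (v i) q ^ 2

/-- A Euclidean realization of the configuration `v` with barycenter `b`. -/
def IsRealization {T : Type*} [MetricSpace T] {ι : Type*} {N : ℕ}
    (b : T) (v : ι → T) (w : ι → EuclideanSpace ℝ (Fin N)) : Prop :=
  (∀ i, ‖w i‖ = dist b (v i)) ∧ ∀ i j, ‖w i - w j‖ ≤ dist (v i) (v j)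

/-- The invariant `δ({v_i},{t_i})` of a weighted configuration with barycenter `b`. -/
noncomputable def deltaConfig {T : Type*} [MetricSpace T] {m : ℕ}
    (b : T) (v : Fin m → T) (t : Fin m → ℝ) : ℝ :=
  sInf {r : ℝ | ∃ (N : ℕ) (w : Fin m → EuclideanSpace ℝ (Fin N)),
    IsRealization b v w ∧ r = ‖∑ i, t i • w i‖ ^ 2 / ∑ i, t i * ‖w i‖ ^ 2}

/-- The invariant `δ(T, v)`: supremum of `δ` over configurations of distinct points with
positive weights summing to `1` whose barycenter is `v`. -/
noncomputable def deltaAt (T : Type*) [MetricSpace T] (v : T) : ℝ :=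
  sSup {r : ℝ | ∃ (m : ℕ) (vv : Fin m → T) (t : Fin m → ℝ),
    Function.Injective vv ∧ (∀ i, 0 < t i) ∧ (∑ i, t i = 1) ∧
    IsWBarycenter v vv t ∧ r = deltaConfig v vv t}

/-- The invariant `δ(T)`: supremum of `δ` over all weighted configurations. -/
noncomputable def deltaTotal (T : Type*) [MetricSpace T] : ℝ :=
  sSup {r : ℝ | ∃ (m : ℕ) (vv : Fin m → T) (t : Fin m → ℝ) (b : T),
    Function.Injective vv ∧ (∀ i, 0 < t i) ∧ (∑ i, t i = 1) ∧
    IsWBarycenter b vv t ∧ r = deltaConfig b vv t}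


/-- The first nonzero eigenvalue `μ₁` of the weighted graph Laplacian, via the
Rayleigh quotient over nonconstant real functions.  Here `m1` are the vertex weights
and `m2` the (symmetric) edge weights, with `m2 y y' = 0` for non-edges. -/
noncomputable def mu1Graph {V : Type*} [Fintype V] (m1 : V → ℝ) (m2 : V → V → ℝ) : ℝ :=
  sInf {r : ℝ | ∃ f : V → ℝ, (∃ y y', f y ≠ f y') ∧
    r = ((1 : ℝ) / 2 * ∑ y, ∑ y', m2 y y' * (f y - f y') ^ 2) /
        (∑ y, m1 y * (f y - ∑ y', (m1 y' / ∑ y'', m1 y'') * f y') ^ 2)}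

/-- Wang's invariant `λ₁(L, T)`: infimum of the Rayleigh quotient over nonconstant
maps `φ : L(0) → T`, with `φ̄` the barycenter of `φ` with weights `m1/m`. -/
noncomputable def lambda1Graph {V : Type*} [Fintype V] (m1 : V → ℝ) (m2 : V → V → ℝ)
    (T : Type*) [MetricSpace T] : ℝ :=
  sInf {r : ℝ | ∃ φ : V → T, (∃ y y', φ y ≠ φ y') ∧ ∃ b : T,
    IsWBarycenter b φ (fun y => m1 y / ∑ y', m1 y') ∧
    r = ((1 : ℝ) / 2 * ∑ y, ∑ y', m2 y y' * dist (φ y) (φ y') ^ 2) /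
        (∑ y, m1 y * dist b (φ y) ^ 2)}

section Geodesic

variable {T : Type*} [MetricSpace T] [HadamardSpace T]

noncomputable def midpt (x y : T) : T := (HadamardSpace.midpoints x y).choose

lemma midpt_left (x y : T) : dist x (midpt x y) = dist x y / 2 :=
  (HadamardSpace.midpoints x y).choose_spec.1

lemma midpt_right (x y : T) : dist (midpt x y) y = dist x y / 2 :=
  (HadamardSpace.midpoints x y).choose_spec.2

noncomputable def chain (x y : T) : ℕ → ℕ → T
  | 0 => fun k => if k = 0 then x else y
  | (n+1) => fun k =>
      if k % 2 = 0 then chain x y n (k / 2)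
      else midpt (chain x y n (k / 2)) (chain x y n (k / 2 + 1))

variable (x y : T)

lemma chain_zero_left : ∀ n, chain x y n 0 = x := by
  intro n; induction n with
  | zero => simp [chain]
  | succ n ih => simp [chain, ih]

lemma chain_top : ∀ n, chain x y n (2 ^ n) = y := by
  intro n; induction n with
  | zero => simp [chain]
  | succ n ih =>
      have h2 : 2 ^ (n+1) % 2 = 0 := by
        simp [pow_succ, Nat.mul_mod_left]
      have h3 : 2 ^ (n+1) / 2 = 2 ^ n := by
        rw [pow_succ]; exact Nat.mul_div_cancel _ (by norm_num)
      simp [chain, h2, h3, ih]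

lemma chain_even (n k : ℕ) : chain x y (n+1) (2*k) = chain x y n k := by
  have : (2*k) % 2 = 0 := Nat.mul_mod_right 2 k
  simp [chain, this, Nat.mul_div_cancel_left k (by norm_num : 0 < 2)]

lemma chain_odd (n k : ℕ) :
    chain x y (n+1) (2*k+1) = midpt (chain x y n k) (chain x y n (k+1)) := by
  have h1 : (2*k+1) % 2 = 1 := by omega
  have h2 : (2*k+1) / 2 = k := by omega
  simp [chain, h1, h2]

lemma dist_chain_succ : ∀ n k, k < 2 ^ n →
    dist (chain x y n k) (chain x y n (k+1)) = dist x y / 2 ^ n := by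
  intro n
  induction n with
  | zero =>
      intro k hk
      interval_cases k
      simp [chain]
  | succ n ih =>
      intro k hk
      rcases Nat.even_or_odd k with ⟨j, hj⟩ | ⟨j, hj⟩
      · subst hj
        have hj' : j < 2 ^ n := by rw [pow_succ] at hk; omega
        have e1 : j + j = 2 * j := by ring
        rw [e1, chain_even, show 2*j+1 = 2*j+1 from rfl, chain_odd, midpt_left,
          ih j hj']
        rw [pow_succ]; ring
      · subst hj
        have hj' : j < 2 ^ n := by rw [pow_succ] at hk; omega
        have e2 : 2*j+1+1 = 2*(j+1) := by ring
        rw [chain_odd, e2, chain_even, midpt_right, ih j hj']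
        rw [pow_succ]; ring

lemma dist_chain_le (n k j : ℕ) (h : k + j ≤ 2 ^ n) :
    dist (chain x y n k) (chain x y n (k+j)) ≤ j * (dist x y / 2 ^ n) := by
  induction j with
  | zero => simp
  | succ j ih =>
      have h' : k + j ≤ 2 ^ n := by omega
      calc dist (chain x y n k) (chain x y n (k+(j+1)))
          ≤ dist (chain x y n k) (chain x y n (k+j))
            + dist (chain x y n (k+j)) (chain x y n (k+j+1)) := by
            rw [show k+(j+1) = k+j+1 from rfl]; exact dist_triangle _ _ _
        _ ≤ j * (dist x y / 2 ^ n) + dist x y / 2 ^ n := by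
            gcongr
            · exact ih h'
            · exact le_of_eq (dist_chain_succ x y n (k+j) (by omega))
        _ = (j+1 : ℕ) * (dist x y / 2 ^ n) := by push_cast; ring

lemma dist_chain_eq (n k j : ℕ) (h : k + j ≤ 2 ^ n) :
    dist (chain x y n k) (chain x y n (k+j)) = j * (dist x y / 2 ^ n) := by
  refine le_antisymm (dist_chain_le x y n k j h) ?_
  have h1 : dist (chain x y n 0) (chain x y n k) ≤ k * (dist x y / 2 ^ n) := by
    simpa using dist_chain_le x y n 0 k (by omega)
  have h2 : dist (chain x y n (k+j)) (chain x y n (2 ^ n)) ≤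
      (2 ^ n - (k+j) : ℕ) * (dist x y / 2 ^ n) := by
    have := dist_chain_le x y n (k+j) (2 ^ n - (k+j)) (by omega)
    rwa [show k+j+(2 ^ n - (k+j)) = 2 ^ n by omega] at this
  rw [chain_zero_left] at h1
  rw [chain_top] at h2
  have htri : dist x y ≤ dist x (chain x y n k) + dist (chain x y n k) (chain x y n (k+j))
      + dist (chain x y n (k+j)) y := by
    have := dist_triangle4 x (chain x y n k) (chain x y n (k+j)) y
    linarith
  have hcast : ((2 ^ n - (k+j) : ℕ) : ℝ) = 2 ^ n - ((k:ℝ)+(j:ℝ)) := by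
    push_cast [Nat.cast_sub h]; ring
  rw [hcast] at h2
  have h2n : (0:ℝ) < 2 ^ n := by positivity
  have hkey : (j:ℝ) * (dist x y / 2 ^ n) =
      dist x y - (k:ℝ)*(dist x y / 2 ^ n) - (2 ^ n - ((k:ℝ)+(j:ℝ)))*(dist x y / 2 ^ n) := by
    field_simp
    ring
  linarith

lemma dist_chain_abs (n k l : ℕ) (hk : k ≤ 2 ^ n) (hl : l ≤ 2 ^ n) :
    dist (chain x y n k) (chain x y n l) = |(k:ℝ) - l| * (dist x y / 2 ^ n) := by
  rcases le_total k l with h | h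
  · have e := dist_chain_eq x y n k (l-k) (by omega)
    rw [show k+(l-k) = l by omega] at e
    rw [e, abs_sub_comm, abs_of_nonneg (sub_nonneg.2 (Nat.cast_le.2 h : (k:ℝ) ≤ l)),
      ← Nat.cast_sub h]
  · have e := dist_chain_eq x y n l (k-l) (by omega)
    rw [show l+(k-l) = k by omega] at e
    rw [dist_comm, e, abs_of_nonneg (sub_nonneg.2 (Nat.cast_le.2 h : (l:ℝ) ≤ k)),
      ← Nat.cast_sub h]

lemma exists_geodesic (x y : T) : ∃ g : ℝ → T, g 0 = x ∧ g 1 = y ∧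
    ∀ s ∈ Icc (0:ℝ) 1, ∀ t ∈ Icc (0:ℝ) 1, dist (g s) (g t) = |s - t| * dist x y := by
  classical
  haveI : CompleteSpace T := HadamardSpace.complete
  set d := dist x y with hd
  have hd0 : 0 ≤ d := dist_nonneg
  set seq : ℝ → ℕ → T := fun u n => chain x y n ⌊u * 2^n⌋₊ with hseq
  have h2n : ∀ n : ℕ, (0:ℝ) < 2^n := fun n => by positivity
  have hfl : ∀ u ∈ Icc (0:ℝ) 1, ∀ n, ⌊u * 2^n⌋₊ ≤ 2^n := by
    intro u hu n
    have h1 : u * 2^n ≤ ((2^n : ℕ):ℝ) := by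
      push_cast
      nlinarith [hu.2, h2n n]
    calc ⌊u*2^n⌋₊ ≤ ⌊((2^n:ℕ):ℝ)⌋₊ := Nat.floor_le_floor h1
      _ = 2^n := Nat.floor_natCast _
  have hfl_le : ∀ u ∈ Icc (0:ℝ) 1, ∀ n, (⌊u * 2^n⌋₊ : ℝ) ≤ u * 2^n := by
    intro u hu n
    exact Nat.floor_le (by nlinarith [hu.1, h2n n])
  have hfl_lt : ∀ (u : ℝ) (n : ℕ), u * 2^n < ⌊u * 2^n⌋₊ + 1 := by
    intro u n; exact Nat.lt_floor_add_one _
  have hstep : ∀ u ∈ Icc (0:ℝ) 1, ∀ n, dist (seq u n) (seq u (n+1)) ≤ (d/2) * (1/2)^n := by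
    intro u hu n
    set k := ⌊u * 2^n⌋₊ with hk
    set k' := ⌊u * 2^(n+1)⌋₊ with hk'
    have e12 : u * 2^(n+1) = 2 * (u * 2^n) := by ring
    have h1 : 2*k ≤ k' := by
      apply Nat.le_floor
      have := hfl_le u hu n
      push_cast
      rw [e12]; linarith
    have h2 : k' ≤ 2*k+1 := by
      have hlt : u * 2^(n+1) < ((2*k+2 : ℕ):ℝ) := by
        have := hfl_lt u n
        push_cast
        rw [e12]; push_cast at this ⊢; linarith
      have hnn : (0:ℝ) ≤ u * 2^(n+1) := by nlinarith [hu.1, h2n (n+1)]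
      have : k' < 2*k+2 := by
        rw [hk']
        exact (Nat.floor_lt hnn).2 hlt
      omega
    have e : seq u n = chain x y (n+1) (2*k) := (chain_even x y n k).symm
    have hb1 : 2*k ≤ 2^(n+1) := by have := hfl u hu n; rw [pow_succ]; omega
    have hb2 : k' ≤ 2^(n+1) := hfl u hu (n+1)
    have hdist := dist_chain_abs x y (n+1) (2*k) k' hb1 hb2
    have habs : |((2*k:ℕ):ℝ) - (k':ℕ)| ≤ 1 := by
      rw [abs_le]
      constructor <;> [skip; skip] <;>
      · push_cast
        have c1 : ((2*k:ℕ):ℝ) ≤ k' := by exact_mod_cast Nat.cast_le.2 h1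
        have c2 : ((k':ℕ):ℝ) ≤ 2*k+1 := by exact_mod_cast Nat.cast_le.2 h2
        push_cast at c1 c2
        linarith
    calc dist (seq u n) (seq u (n+1)) = |((2*k:ℕ):ℝ) - k'| * (d / 2^(n+1)) := by
          rw [e]; exact hdist
      _ ≤ 1 * (d / 2^(n+1)) := by
          apply mul_le_mul_of_nonneg_right habs (by positivity)
      _ = (d/2) * (1/2)^n := by
          rw [one_mul, pow_succ, div_pow, one_pow]; ring
  have hcauchy : ∀ u ∈ Icc (0:ℝ) 1, CauchySeq (seq u) := fun u hu =>
    cauchySeq_of_le_geometric (1/2) (d/2) (by norm_num) (hstep u hu)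
  choose glim hglim using fun (u : ℝ) (hu : u ∈ Icc (0:ℝ) 1) =>
    cauchySeq_tendsto_of_complete (hcauchy u hu)
  have h01 : (0:ℝ) ∈ Icc (0:ℝ) 1 := by constructor <;> norm_num
  have h11 : (1:ℝ) ∈ Icc (0:ℝ) 1 := by constructor <;> norm_num
  refine ⟨fun u => if hu : u ∈ Icc (0:ℝ) 1 then glim u hu else x, ?_, ?_, ?_⟩
  · show (if hu : (0:ℝ) ∈ Icc (0:ℝ) 1 then glim 0 hu else x) = x
    rw [dif_pos h01]
    have hs : seq 0 = fun _ => x := by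
      funext n
      show chain x y n ⌊(0:ℝ) * 2^n⌋₊ = x
      norm_num [chain_zero_left]
    refine tendsto_nhds_unique (hglim 0 h01) ?_
    rw [hs]
    exact tendsto_const_nhds
  · show (if hu : (1:ℝ) ∈ Icc (0:ℝ) 1 then glim 1 hu else x) = y
    rw [dif_pos h11]
    have hs : seq 1 = fun _ => y := by
      funext n
      show chain x y n ⌊(1:ℝ) * 2^n⌋₊ = y
      have h : ⌊(1:ℝ) * 2^n⌋₊ = 2^n := by
        rw [one_mul, show ((2:ℝ)^n) = ((2^n:ℕ):ℝ) by push_cast; ring, Nat.floor_natCast]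
      rw [h, chain_top]
    refine tendsto_nhds_unique (hglim 1 h11) ?_
    rw [hs]
    exact tendsto_const_nhds
  · intro s hs t ht
    show dist (if hu : s ∈ Icc (0:ℝ) 1 then glim s hu else x)
      (if hu : t ∈ Icc (0:ℝ) 1 then glim t hu else x) = |s - t| * dist x y
    rw [dif_pos hs, dif_pos ht]
    have hlim1 : Tendsto (fun n => dist (seq s n) (seq t n)) atTop
        (𝓝 (dist (glim s hs) (glim t ht))) := (hglim s hs).dist (hglim t ht)
    have hflt : ∀ u ∈ Icc (0:ℝ) 1, Tendsto (fun n => (⌊u * 2^n⌋₊ : ℝ) / 2^n) atTop (𝓝 u) := by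
      intro u hu
      have hsq : ∀ n : ℕ, |(⌊u * 2^n⌋₊ : ℝ) / 2^n - u| ≤ (1/2)^n := by
        intro n
        have l1 := hfl_le u hu n
        have l2 := hfl_lt u n
        have l3 := h2n n
        have hhalf : ((1:ℝ)/2)^n = 1/2^n := by rw [div_pow, one_pow]
        have g1 : u ≤ ((⌊u * 2^n⌋₊:ℝ)+1)/2^n := by rw [le_div_iff₀ l3]; linarith
        have g2 : (⌊u * 2^n⌋₊:ℝ)/2^n ≤ u := by rw [div_le_iff₀ l3]; linarith
        have g3 : ((⌊u * 2^n⌋₊:ℝ)+1)/2^n = (⌊u * 2^n⌋₊:ℝ)/2^n + 1/2^n := by ring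
        have g4 : (0:ℝ) < 1/2^n := by positivity
        rw [abs_le, hhalf]
        constructor <;> linarith
      have h0 : Tendsto (fun n : ℕ => (⌊u * 2^n⌋₊ : ℝ) / 2^n - u) atTop (𝓝 0) := by
        apply squeeze_zero_norm hsq
        exact tendsto_pow_atTop_nhds_zero_of_lt_one (by norm_num) (by norm_num)
      have := h0.add (tendsto_const_nhds (x := u))
      simpa using this
    have hlim2 : Tendsto (fun n => dist (seq s n) (seq t n)) atTop (𝓝 (|s - t| * d)) := by
      have heq : ∀ n, dist (seq s n) (seq t n) =
          |(⌊s * 2^n⌋₊ : ℝ)/2^n - (⌊t * 2^n⌋₊ : ℝ)/2^n| * d := by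
        intro n
        rw [hseq]
        simp only
        rw [dist_chain_abs x y n _ _ (hfl s hs n) (hfl t ht n), div_sub_div_same, abs_div,
          abs_of_pos (h2n n)]
        field_simp
        rw [hd]
      simp only [heq]
      exact (((hflt s hs).sub (hflt t ht)).abs).mul tendsto_const_nhds
    exact tendsto_nhds_unique hlim1 hlim2

lemma convexOn_of_midpoint {f : ℝ → ℝ} {a b : ℝ}
    (hc : ContinuousOn f (Icc a b))
    (hm : ∀ s ∈ Icc a b, ∀ t ∈ Icc a b, f ((s+t)/2) ≤ (f s + f t)/2) :
    ConvexOn ℝ (Icc a b) f := by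
  classical
  refine ⟨convex_Icc a b, ?_⟩
  intro p hp q hq α β hα hβ hαβ
  simp only [smul_eq_mul]
  set L : ℝ → ℝ := fun lam => f (p + lam*(q-p)) - ((1-lam)*f p + lam*f q) with hL
  have hmem : ∀ lam ∈ Icc (0:ℝ) 1, p + lam*(q-p) ∈ Icc a b := by
    intro lam hl
    have := (convex_Icc a b) hp hq (by linarith [hl.2] : (0:ℝ) ≤ 1 - lam) hl.1 (by ring)
    simpa [smul_eq_mul, show (1-lam)*p + lam*q = p + lam*(q-p) by ring] using this
  have hLC : ContinuousOn L (Icc 0 1) := by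
    apply ContinuousOn.sub
    · exact hc.comp (by fun_prop) hmem
    · fun_prop
  have hLmid : ∀ s ∈ Icc (0:ℝ) 1, ∀ t ∈ Icc (0:ℝ) 1, L ((s+t)/2) ≤ (L s + L t)/2 := by
    intro s hs t ht
    have h := hm _ (hmem s hs) _ (hmem t ht)
    have e : (p + s*(q-p) + (p + t*(q-p)))/2 = p + ((s+t)/2)*(q-p) := by ring
    rw [e] at h
    simp only [hL]
    linarith
  have hL0 : L 0 = 0 := by simp [hL]
  have hL1 : L 1 = 0 := by simp [hL]
  have hkey : ∀ lam ∈ Icc (0:ℝ) 1, L lam ≤ 0 := by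
    intro lam hlam
    by_contra hcon
    push_neg at hcon
    obtain ⟨p₀, hp₀, hmax⟩ := isCompact_Icc.exists_isMaxOn (⟨0, by constructor <;> norm_num⟩)
      hLC
    set M := L p₀ with hM
    have hMpos : 0 < M := lt_of_lt_of_le hcon (hmax hlam)
    set K : Set ℝ := Icc (0:ℝ) 1 ∩ L ⁻¹' {M} with hK
    have hKclosed : IsClosed K := hLC.preimage_isClosed_of_isClosed isClosed_Icc
      isClosed_singleton
    have hKne : K.Nonempty := ⟨p₀, hp₀, rfl⟩
    have hKbdd : BddBelow K := ⟨0, fun z hz => hz.1.1⟩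
    set c := sInf K with hc'
    have hcK : c ∈ K := hKclosed.csInf_mem hKne hKbdd
    have hc01 : c ∈ Icc (0:ℝ) 1 := hcK.1
    have hcM : L c = M := hcK.2
    have hc0 : c ≠ 0 := fun h => by rw [h, hL0] at hcM; linarith
    have hc1 : c ≠ 1 := fun h => by rw [h, hL1] at hcM; linarith
    have hc0' : 0 < c := lt_of_le_of_ne hc01.1 (Ne.symm hc0)
    have hc1' : c < 1 := lt_of_le_of_ne hc01.2 hc1
    set h := min c (1-c) with hh
    have hhpos : 0 < h := lt_min hc0' (by linarith)
    have hm1 : c - h ∈ Icc (0:ℝ) 1 := by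
      constructor
      · have : h ≤ c := min_le_left _ _
        linarith
      · linarith [hc01.2]
    have hm2 : c + h ∈ Icc (0:ℝ) 1 := by
      constructor
      · linarith [hc01.1]
      · have : h ≤ 1 - c := min_le_right _ _
        linarith
    have hmid := hLmid _ hm1 _ hm2
    rw [show (c - h + (c + h))/2 = c by ring, hcM] at hmid
    have hlt : L (c - h) < M := by
      have hne : c - h ∉ K := fun hmem' => by
        have := csInf_le hKbdd hmem'
        rw [← hc'] at this
        linarith
      have hle : L (c - h) ≤ M := hmax hm1
      rcases lt_or_eq_of_le hle with h' | h'
      · exact h'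
      · exact absurd ⟨hm1, h'⟩ hne
    have hle2 : L (c + h) ≤ M := hmax hm2
    clear_value M c h L
    linarith
  have hβ1 : β ≤ 1 := by linarith
  have hkey2 := hkey β ⟨hβ, hβ1⟩
  simp only [hL] at hkey2
  have hα' : α = 1 - β := by linarith
  subst hα'
  have e : p + β * (q - p) = (1 - β) * p + β * q := by ring
  rw [e] at hkey2
  linarith

lemma geodesic_jensen {V : Type*} [Fintype V] (x y : T) (g : ℝ → T)
    (hg : ∀ s ∈ Icc (0:ℝ) 1, ∀ t ∈ Icc (0:ℝ) 1, dist (g s) (g t) = |s - t| * dist x y)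
    (w : V → ℝ) (hw : ∀ v, 0 ≤ w v) (hw1 : ∑ v, w v = 1)
    (s : V → ℝ) (hs : ∀ v, s v ∈ Icc (0:ℝ) 1) :
    IsWBarycenter (g (∑ v, w v * s v)) (fun v => g (s v)) w := by
  classical
  set d := dist x y with hd
  have hd0 : 0 ≤ d := dist_nonneg
  set sbar := ∑ v, w v * s v with hsbar
  have hsbar01 : sbar ∈ Icc (0:ℝ) 1 := by
    constructor
    · exact Finset.sum_nonneg fun v _ => mul_nonneg (hw v) (hs v).1
    · calc ∑ v, w v * s v ≤ ∑ v, w v * 1 :=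
          Finset.sum_le_sum fun v _ => mul_le_mul_of_nonneg_left (hs v).2 (hw v)
        _ = 1 := by simp [hw1]
  -- continuity of g on Icc 0 1
  have hgc : ContinuousOn g (Icc (0:ℝ) 1) := by
    refine LipschitzOnWith.continuousOn (K := Real.toNNReal d) ?_
    apply LipschitzOnWith.of_dist_le_mul
    intro u hu v hv
    rw [hg u hu v hv, Real.dist_eq, Real.coe_toNNReal d hd0, mul_comm]
  intro q
  set F : ℝ → ℝ := fun u => dist q (g u)^2 - d^2 * u^2 with hF
  have hFc : ContinuousOn F (Icc (0:ℝ) 1) := by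
    apply ContinuousOn.sub
    · exact ((continuous_const.dist continuous_id).comp_continuousOn hgc).pow 2
    · fun_prop
  have hFm : ∀ u ∈ Icc (0:ℝ) 1, ∀ v ∈ Icc (0:ℝ) 1, F ((u+v)/2) ≤ (F u + F v)/2 := by
    intro u hu v hv
    have hmidmem : (u+v)/2 ∈ Icc (0:ℝ) 1 := by
      constructor
      · linarith [hu.1, hv.1]
      · linarith [hu.2, hv.2]
    have e1 : dist (g u) (g ((u+v)/2)) = dist (g u) (g v) / 2 := by
      rw [hg u hu _ hmidmem, hg u hu v hv, show u - (u+v)/2 = (u-v)/2 by ring, abs_div,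
        abs_two]
      ring
    have e2 : dist (g ((u+v)/2)) (g v) = dist (g u) (g v) / 2 := by
      rw [dist_comm, hg v hv _ hmidmem, hg u hu v hv, show v - (u+v)/2 = -((u-v)/2) by ring,
        abs_neg, abs_div, abs_two, abs_sub_comm]
      ring
    have hcn := HadamardSpace.cn q (g u) (g v) (g ((u+v)/2)) e1 e2
    have e3 : dist (g u) (g v)^2 = (u-v)^2 * d^2 := by
      rw [hg u hu v hv, mul_pow, sq_abs]
    rw [e3] at hcn
    simp only [hF]
    nlinarith [hcn]
  have hconv : ConvexOn ℝ (Icc (0:ℝ) 1) F := convexOn_of_midpoint hFc hFm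
  have hjensen : F (∑ v, w v • s v) ≤ ∑ v, w v • F (s v) :=
    hconv.map_sum_le (fun v _ => hw v) hw1 (fun v _ => hs v)
  simp only [smul_eq_mul] at hjensen
  have hsum1 : ∑ v, w v * F (s v) = ∑ v, w v * dist q (g (s v))^2 - d^2 * ∑ v, w v * s v^2 := by
    simp only [hF]
    rw [Finset.mul_sum, ← Finset.sum_sub_distrib]
    apply Finset.sum_congr rfl
    intro v _
    ring
  have hdistb : ∀ v, dist (g (s v)) (g sbar) = |s v - sbar| * d := fun v =>
    hg (s v) (hs v) sbar hsbar01
  have hLHS : ∑ v, w v * dist (g (s v)) (g sbar)^2 = d^2 * (∑ v, w v * s v^2 - sbar^2) := by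
    have e : ∀ v, w v * dist (g (s v)) (g sbar)^2 = d^2 * (w v * s v^2)
        - (2*sbar*d^2) * (w v * s v) + (sbar^2*d^2) * w v := by
      intro v
      rw [hdistb v, mul_pow, sq_abs]
      ring
    rw [Finset.sum_congr rfl (fun v _ => e v), Finset.sum_add_distrib,
      Finset.sum_sub_distrib, ← Finset.mul_sum, ← Finset.mul_sum, ← Finset.mul_sum,
      ← hsbar, hw1]
    ring
  have hfin : F sbar ≤ ∑ v, w v * dist q (g (s v))^2 - d^2 * ∑ v, w v * s v^2 := by
    rw [← hsum1]
    exact hjensen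
  simp only [hF] at hfin
  have hq0 : 0 ≤ dist q (g sbar)^2 := sq_nonneg _
  calc ∑ v, w v * dist (g (s v)) (g sbar)^2 = d^2 * (∑ v, w v * s v^2 - sbar^2) := hLHS
    _ ≤ ∑ v, w v * dist q (g (s v))^2 := by nlinarith [hfin]
    _ = ∑ v, w v * dist (g (s v)) q^2 := by
        apply Finset.sum_congr rfl
        intro v _
        rw [dist_comm]

end Geodesic

section Delta

variable {T' : Type*} [MetricSpace T']

lemma pilp_sum_apply {N : ℕ} {ι : Type*} (s : Finset ι) (f : ι → EuclideanSpace ℝ (Fin N))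
    (k : Fin N) : (∑ i ∈ s, f i) k = ∑ i ∈ s, f i k := by
  classical
  induction s using Finset.cons_induction with
  | empty => simp [PiLp.zero_apply]
  | cons a s ha ih => rw [Finset.sum_cons, Finset.sum_cons, PiLp.add_apply, ih]

lemma euclidean_norm_sq {N : ℕ} (ξ : EuclideanSpace ℝ (Fin N)) : ‖ξ‖^2 = ∑ k, (ξ k)^2 := by
  rw [EuclideanSpace.norm_eq, Real.sq_sqrt (Finset.sum_nonneg fun k _ => sq_nonneg _)]
  exact Finset.sum_congr rfl fun k _ => by rw [Real.norm_eq_abs, sq_abs]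

lemma collinear_realization {m : ℕ} (b : T') (vv : Fin m → T') :
    IsRealization b vv
      (fun i => (WithLp.equiv 2 (Fin 1 → ℝ)).symm (fun _ => dist b (vv i))) := by
  have hnorm : ∀ c : ℝ, ‖(WithLp.equiv 2 (Fin 1 → ℝ)).symm (fun _ => c)‖ = |c| := by
    intro c
    rw [EuclideanSpace.norm_eq]
    simp [Real.sqrt_sq_eq_abs]
  constructor
  · intro i
    rw [hnorm]
    exact abs_of_nonneg dist_nonneg
  · intro i j
    have hsub : (WithLp.equiv 2 (Fin 1 → ℝ)).symm (fun _ => dist b (vv i)) -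
        (WithLp.equiv 2 (Fin 1 → ℝ)).symm (fun _ => dist b (vv j)) =
        (WithLp.equiv 2 (Fin 1 → ℝ)).symm (fun _ => dist b (vv i) - dist b (vv j)) := rfl
    rw [hsub, hnorm]
    have h := abs_dist_sub_le (vv i) (vv j) b
    rwa [dist_comm (vv i) b, dist_comm (vv j) b] at h

lemma quotient_le_one {m N : ℕ} (t : Fin m → ℝ) (ht : ∀ i, 0 ≤ t i) (ht1 : ∑ i, t i = 1)
    (w : Fin m → EuclideanSpace ℝ (Fin N)) :
    ‖∑ i, t i • w i‖^2 / ∑ i, t i * ‖w i‖^2 ≤ 1 := by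
  have hden0 : 0 ≤ ∑ i, t i * ‖w i‖^2 :=
    Finset.sum_nonneg fun i _ => mul_nonneg (ht i) (sq_nonneg _)
  rcases eq_or_lt_of_le hden0 with h0 | hpos
  · rw [← h0, div_zero]
    norm_num
  · rw [div_le_one hpos]
    have h1 : ‖∑ i, t i • w i‖ ≤ ∑ i, t i * ‖w i‖ := by
      refine (norm_sum_le _ _).trans (le_of_eq ?_)
      exact Finset.sum_congr rfl fun i _ => by rw [norm_smul, Real.norm_eq_abs,
        abs_of_nonneg (ht i)]
    have h2 : (∑ i, t i * ‖w i‖)^2 ≤ (∑ i, t i) * (∑ i, t i * ‖w i‖^2) := by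
      have hcs := Finset.sum_mul_sq_le_sq_mul_sq Finset.univ (fun i => Real.sqrt (t i))
        (fun i => Real.sqrt (t i) * ‖w i‖)
      have e1 : ∀ i : Fin m, Real.sqrt (t i) * (Real.sqrt (t i) * ‖w i‖) = t i * ‖w i‖ := by
        intro i
        rw [← mul_assoc, Real.mul_self_sqrt (ht i)]
      have e2 : ∀ i : Fin m, Real.sqrt (t i) ^ 2 = t i := fun i => Real.sq_sqrt (ht i)
      have e3 : ∀ i : Fin m, (Real.sqrt (t i) * ‖w i‖)^2 = t i * ‖w i‖^2 := by
        intro i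
        rw [mul_pow, Real.sq_sqrt (ht i)]
      rw [Finset.sum_congr rfl fun i _ => e1 i, Finset.sum_congr rfl fun i _ => e2 i,
        Finset.sum_congr rfl fun i _ => e3 i] at hcs
      exact hcs
    calc ‖∑ i, t i • w i‖^2 ≤ (∑ i, t i * ‖w i‖)^2 := by
          exact pow_le_pow_left₀ (norm_nonneg _) h1 2
      _ ≤ (∑ i, t i) * (∑ i, t i * ‖w i‖^2) := h2
      _ = ∑ i, t i * ‖w i‖^2 := by rw [ht1, one_mul]

lemma deltaConfig_bddBelow {m : ℕ} (b : T') (vv : Fin m → T') (t : Fin m → ℝ)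
    (ht : ∀ i, 0 ≤ t i) :
    BddBelow {r : ℝ | ∃ (N : ℕ) (w : Fin m → EuclideanSpace ℝ (Fin N)),
      IsRealization b vv w ∧ r = ‖∑ i, t i • w i‖ ^ 2 / ∑ i, t i * ‖w i‖ ^ 2} := by
  refine ⟨0, ?_⟩
  rintro r ⟨N, w, hw, rfl⟩
  exact div_nonneg (sq_nonneg _) (Finset.sum_nonneg fun i _ => mul_nonneg (ht i) (sq_nonneg _))

lemma deltaConfig_le_one {m : ℕ} (b : T') (vv : Fin m → T') (t : Fin m → ℝ)
    (ht : ∀ i, 0 ≤ t i) (ht1 : ∑ i, t i = 1) : deltaConfig b vv t ≤ 1 := by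
  refine csInf_le_of_le (deltaConfig_bddBelow b vv t ht) ⟨1, _, collinear_realization b vv, rfl⟩
    (quotient_le_one t ht ht1 _)

lemma deltaTotal_set_bddAbove (T'' : Type*) [MetricSpace T''] :
    BddAbove {r : ℝ | ∃ (m : ℕ) (vv : Fin m → T'') (t : Fin m → ℝ) (b : T''),
      Function.Injective vv ∧ (∀ i, 0 < t i) ∧ (∑ i, t i = 1) ∧
      IsWBarycenter b vv t ∧ r = deltaConfig b vv t} := by
  refine ⟨1, ?_⟩
  rintro r ⟨m, vv, t, b, _, htpos, ht1, _, rfl⟩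
  exact deltaConfig_le_one b vv t (fun i => (htpos i).le) ht1

end Delta

lemma part2_aux {V : Type*} [Fintype V] (m1 : V → ℝ) (m2 : V → V → ℝ)
    (hpos : ∀ u, 0 < m1 u) {T : Type*} [MetricSpace T] [HadamardSpace T]
    {x y : T} (hxy : x ≠ y) (f : V → ℝ) (hf : ∃ a b, f a ≠ f b) :
    ∃ φ : V → T, (∃ a b, φ a ≠ φ b) ∧ ∃ bb : T,
      IsWBarycenter bb φ (fun v => m1 v / ∑ v', m1 v') ∧
      ((1:ℝ)/2 * ∑ u, ∑ u', m2 u u' * dist (φ u) (φ u') ^ 2) /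
        (∑ u, m1 u * dist bb (φ u) ^ 2) =
      ((1:ℝ)/2 * ∑ u, ∑ u', m2 u u' * (f u - f u') ^ 2) /
        (∑ u, m1 u * (f u - ∑ u', m1 u' / (∑ u'', m1 u'') * f u') ^ 2) := by
  classical
  obtain ⟨a0, b0, hab⟩ := hf
  haveI : Nonempty V := ⟨a0⟩
  set mtot := ∑ v', m1 v' with hmtot
  have hmtot0 : 0 < mtot := Finset.sum_pos (fun i _ => hpos i) Finset.univ_nonempty
  set d := dist x y with hdd
  have hd0 : 0 < d := dist_pos.2 hxy
  obtain ⟨g, hg0, hg1, hg⟩ := exists_geodesic x y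
  set lo := Finset.univ.inf' Finset.univ_nonempty f with hlo
  set hi := Finset.univ.sup' Finset.univ_nonempty f with hhi
  have hlohi : lo ≤ hi :=
    le_trans (Finset.inf'_le f (Finset.mem_univ a0)) (Finset.le_sup' f (Finset.mem_univ a0))
  have hden1 : (0:ℝ) < hi - lo + 1 := by linarith
  set σ := 1/(hi - lo + 1) with hσ
  have hσ0 : 0 < σ := by rw [hσ]; positivity
  set s : V → ℝ := fun v => (f v - lo) * σ with hs
  have hs01 : ∀ v, s v ∈ Icc (0:ℝ) 1 := by
    intro v
    have h1 : lo ≤ f v := Finset.inf'_le f (Finset.mem_univ v)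
    have h2 : f v ≤ hi := Finset.le_sup' f (Finset.mem_univ v)
    constructor
    · exact mul_nonneg (by linarith) hσ0.le
    · rw [hs]
      simp only
      rw [hσ, mul_one_div, div_le_one hden1]
      linarith
  have hwt0 : ∀ v, 0 ≤ m1 v / mtot := fun v => div_nonneg (hpos v).le hmtot0.le
  have hwt1 : ∑ v, m1 v / mtot = 1 := by
    rw [← Finset.sum_div, ← hmtot, div_self (ne_of_gt hmtot0)]
  have hbary := geodesic_jensen x y g hg (fun v => m1 v / mtot) hwt0 hwt1 s hs01
  set sbar := ∑ v, m1 v / mtot * s v with hsbar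
  have hsbar01 : sbar ∈ Icc (0:ℝ) 1 := by
    constructor
    · exact Finset.sum_nonneg fun v _ => mul_nonneg (hwt0 v) (hs01 v).1
    · calc ∑ v, m1 v / mtot * s v ≤ ∑ v, m1 v / mtot * 1 :=
          Finset.sum_le_sum fun v _ => mul_le_mul_of_nonneg_left (hs01 v).2 (hwt0 v)
        _ = ∑ v, m1 v / mtot := Finset.sum_congr rfl fun v _ => mul_one _
        _ = 1 := hwt1
  refine ⟨fun v => g (s v), ⟨a0, b0, ?_⟩, g sbar, hbary, ?_⟩
  · intro hc
    change g (s a0) = g (s b0) at hc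
    have hd1 := hg (s a0) (hs01 a0) (s b0) (hs01 b0)
    rw [hc, dist_self] at hd1
    have habs : |s a0 - s b0| = 0 := by
      rcases mul_eq_zero.1 hd1.symm with h | h
      · exact h
      · exact absurd h (ne_of_gt hd0)
    rw [abs_eq_zero, sub_eq_zero] at habs
    have : f a0 - lo = f b0 - lo := by
      have := habs
      rw [hs] at this
      simp only at this
      exact mul_right_cancel₀ (ne_of_gt hσ0) this
    exact hab (by linarith)
  · set fbar := ∑ u', m1 u' / mtot * f u' with hfbar
    have hsbar_eq : sbar = (fbar - lo) * σ := by
      rw [hsbar, hfbar]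
      have e : ∀ v, m1 v / mtot * s v = (m1 v / mtot * f v) * σ - (lo * σ) * (m1 v / mtot) := by
        intro v
        rw [hs]
        simp only
        ring
      rw [Finset.sum_congr rfl fun v _ => e v, Finset.sum_sub_distrib, ← Finset.sum_mul,
        ← Finset.mul_sum, hwt1]
      ring
    have hdφ : ∀ u u', dist (g (s u)) (g (s u')) = |f u - f u'| * (σ * d) := by
      intro u u'
      rw [hg _ (hs01 u) _ (hs01 u')]
      have e : s u - s u' = (f u - f u') * σ := by rw [hs]; simp only; ring
      rw [e, abs_mul, abs_of_pos hσ0]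
      ring
    have hdb : ∀ u, dist (g sbar) (g (s u)) = |f u - fbar| * (σ * d) := by
      intro u
      rw [hg _ hsbar01 _ (hs01 u)]
      have e : sbar - s u = -((f u - fbar) * σ) := by rw [hsbar_eq, hs]; simp only; ring
      rw [e, abs_neg, abs_mul, abs_of_pos hσ0]
      ring
    have hnum : ∑ u, ∑ u', m2 u u' * dist (g (s u)) (g (s u'))^2 =
        (σ*d)^2 * ∑ u, ∑ u', m2 u u' * (f u - f u')^2 := by
      rw [Finset.mul_sum]
      refine Finset.sum_congr rfl fun u _ => ?_
      rw [Finset.mul_sum]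
      refine Finset.sum_congr rfl fun u' _ => ?_
      rw [hdφ, mul_pow, sq_abs]
      ring
    have hden : ∑ u, m1 u * dist (g sbar) (g (s u))^2 =
        (σ*d)^2 * ∑ u, m1 u * (f u - fbar)^2 := by
      rw [Finset.mul_sum]
      refine Finset.sum_congr rfl fun u _ => ?_
      rw [hdb, mul_pow, sq_abs]
      ring
    have hne : ((σ*d)^2 : ℝ) ≠ 0 := by positivity
    rw [hnum, hden, show (1:ℝ)/2 * ((σ*d)^2 * ∑ u, ∑ u', m2 u u' * (f u - f u')^2) =
      (σ*d)^2 * ((1:ℝ)/2 * ∑ u, ∑ u', m2 u u' * (f u - f u')^2) by ring,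
      mul_div_mul_left _ _ hne]


set_option maxHeartbeats 1000000 in
lemma part1_aux {V : Type*} [Fintype V] (m1 : V → ℝ) (m2 : V → V → ℝ)
    (hnn : ∀ u u', 0 ≤ m2 u u') (hpos : ∀ u, 0 < m1 u)
    {T : Type*} [MetricSpace T]
    (hμ0 : 0 ≤ mu1Graph m1 m2)
    (hμbdd : BddBelow {r : ℝ | ∃ f : V → ℝ, (∃ a b, f a ≠ f b) ∧
      r = ((1 : ℝ) / 2 * ∑ u, ∑ u', m2 u u' * (f u - f u') ^ 2) /
        (∑ u, m1 u * (f u - ∑ u', (m1 u' / ∑ u'', m1 u'') * f u') ^ 2)})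
    (φ : V → T) (hφ : ∃ a b, φ a ≠ φ b) (b : T)
    (hbary : IsWBarycenter b φ (fun v => m1 v / ∑ v', m1 v')) :
    (1 - deltaTotal T) * mu1Graph m1 m2 ≤
      ((1:ℝ)/2 * ∑ u, ∑ u', m2 u u' * dist (φ u) (φ u') ^ 2) /
        (∑ u, m1 u * dist b (φ u) ^ 2) := by
  classical
  obtain ⟨a0, b0, hab⟩ := hφ
  haveI : Nonempty V := ⟨a0⟩
  set mtot := ∑ v', m1 v' with hmtot
  have hmtot0 : 0 < mtot := Finset.sum_pos (fun i _ => hpos i) Finset.univ_nonempty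
  have hwt1x : ∑ v, m1 v / mtot = 1 := by
    rw [← Finset.sum_div, ← hmtot, div_self (ne_of_gt hmtot0)]
  set num := (1:ℝ)/2 * ∑ u, ∑ u', m2 u u' * dist (φ u) (φ u')^2 with hnumdef
  set den := ∑ u, m1 u * dist b (φ u)^2 with hdendef
  have hnum0 : 0 ≤ num := by
    rw [hnumdef]
    apply mul_nonneg (by norm_num)
    exact Finset.sum_nonneg fun u _ => Finset.sum_nonneg fun u' _ =>
      mul_nonneg (hnn u u') (sq_nonneg _)
  have hdenpos : 0 < den := by
    have h1 : 0 < dist (φ a0) (φ b0) := dist_pos.2 hab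
    have h2 : 0 < dist b (φ a0) ∨ 0 < dist b (φ b0) := by
      by_contra hcon
      push_neg at hcon
      have e1 : dist b (φ a0) = 0 := le_antisymm hcon.1 dist_nonneg
      have e2 : dist b (φ b0) = 0 := le_antisymm hcon.2 dist_nonneg
      have htr := dist_triangle (φ a0) b (φ b0)
      rw [dist_comm (φ a0) b] at htr
      linarith
    have hterm : ∀ u : V, 0 ≤ m1 u * dist b (φ u)^2 :=
      fun u => mul_nonneg (hpos u).le (sq_nonneg _)
    rcases h2 with h | h
    · exact Finset.sum_pos' (fun u _ => hterm u)
        ⟨a0, Finset.mem_univ _, mul_pos (hpos a0) (pow_pos h 2)⟩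
    · exact Finset.sum_pos' (fun u _ => hterm u)
        ⟨b0, Finset.mem_univ _, mul_pos (hpos b0) (pow_pos h 2)⟩
  -- regroup the configuration by distinct values
  set sT : Finset T := Finset.univ.image φ with hsT
  set m : ℕ := sT.card with hm
  have hcard : Fintype.card {z // z ∈ sT} = m := Fintype.card_coe sT
  set e : {z // z ∈ sT} ≃ Fin m := Fintype.equivFinOfCardEq hcard with he
  set vv : Fin m → T := fun i => ((e.symm i : {z // z ∈ sT}) : T) with hvv
  have hinj : Function.Injective vv := by
    intro i j h
    exact e.symm.injective (Subtype.coe_injective h)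
  have hmemim : ∀ v : V, φ v ∈ sT := fun v => Finset.mem_image_of_mem φ (Finset.mem_univ v)
  set idx : V → Fin m := fun v => e ⟨φ v, hmemim v⟩ with hidxdef
  have hidx : ∀ v, vv (idx v) = φ v := by
    intro v
    rw [hvv, hidxdef]
    simp
  have hfib : ∀ v i, idx v = i ↔ φ v = vv i := by
    intro v i
    constructor
    · intro h
      rw [← hidx v, h]
    · intro h
      have hsub : (⟨φ v, hmemim v⟩ : {z // z ∈ sT}) = e.symm i := Subtype.ext h
      rw [hidxdef]
      simp only
      rw [hsub, Equiv.apply_symm_apply]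
  set t : Fin m → ℝ := fun i => (∑ v ∈ Finset.univ.filter (fun v => idx v = i), m1 v) / mtot
    with htdef
  have group : ∀ (F : T → ℝ), ∑ v, m1 v * F (φ v) =
      ∑ i, (∑ v ∈ Finset.univ.filter (fun v => idx v = i), m1 v) * F (vv i) := by
    intro F
    rw [← Finset.sum_fiberwise Finset.univ idx (fun v => m1 v * F (φ v))]
    refine Finset.sum_congr rfl fun i _ => ?_
    rw [Finset.sum_mul]
    refine Finset.sum_congr rfl fun v hv => ?_
    rw [(hfib v i).1 (Finset.mem_filter.1 hv).2]
  have ht1 : ∑ i, t i = 1 := by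
    simp only [htdef]
    rw [← Finset.sum_div]
    have hgr := group (fun _ => 1)
    simp only [mul_one] at hgr
    rw [← hgr, ← hmtot, div_self (ne_of_gt hmtot0)]
  have htpos : ∀ i, 0 < t i := by
    intro i
    obtain ⟨v0, _, hv0⟩ := Finset.mem_image.1 (e.symm i).2
    have hv0' : φ v0 = vv i := by rw [hv0, hvv]
    refine div_pos (Finset.sum_pos' (fun v _ => (hpos v).le) ?_) hmtot0
    exact ⟨v0, Finset.mem_filter.2 ⟨Finset.mem_univ _, (hfib v0 i).2 hv0'⟩, hpos v0⟩
  have keyq : ∀ q' : T, ∑ i, t i * dist (vv i) q'^2 =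
      (∑ v, m1 v * dist (φ v) q'^2) / mtot := by
    intro q'
    have hgr := group (fun z => dist z q'^2)
    rw [hgr]
    simp only [htdef]
    rw [Finset.sum_congr rfl fun x (_ : x ∈ Finset.univ) => div_mul_eq_mul_div
      ((Finset.filter (fun v => idx v = x) Finset.univ).sum m1) mtot (dist (vv x) q'^2),
      ← Finset.sum_div]
  have hbary' : IsWBarycenter b vv t := by
    intro q
    rw [keyq b, keyq q]
    have hb := hbary q
    have conv : ∀ q' : T, ∑ v, m1 v / mtot * dist (φ v) q'^2 =
        (∑ v, m1 v * dist (φ v) q'^2) / mtot := by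
      intro q'
      rw [Finset.sum_div]
      exact Finset.sum_congr rfl fun v _ => div_mul_eq_mul_div _ _ _
    rw [conv b, conv q] at hb
    exact hb
  -- delta bound
  have hδle : deltaConfig b vv t ≤ deltaTotal T :=
    le_csSup (deltaTotal_set_bddAbove T) ⟨m, vv, t, b, hinj, htpos, ht1, hbary', rfl⟩
  have hden' : den = ∑ v, m1 v * dist (φ v) b^2 := by
    rw [hdendef]
    exact Finset.sum_congr rfl fun v _ => by rw [dist_comm]
  -- main estimate
  have key : ∀ ε : ℝ, 0 < ε → (1 - deltaTotal T) * mu1Graph m1 m2 * den ≤ num + ε := by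
    intro ε0 hε0
    set μ := mu1Graph m1 m2 with hμdef
    set ε' := ε0 / (μ * den + 1) with hε'def
    have hμden : 0 ≤ μ * den := mul_nonneg hμ0 hdenpos.le
    have hε' : 0 < ε' := by
      rw [hε'def]
      positivity
    have hSne : Set.Nonempty {r : ℝ | ∃ (N : ℕ) (w : Fin m → EuclideanSpace ℝ (Fin N)),
        IsRealization b vv w ∧ r = ‖∑ i, t i • w i‖ ^ 2 / ∑ i, t i * ‖w i‖ ^ 2} :=
      ⟨_, 1, _, collinear_realization b vv, rfl⟩
    obtain ⟨r0, hr0mem, hr0lt⟩ := Real.lt_sInf_add_pos hSne hε'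
    obtain ⟨N, w, hreal, hr0⟩ := hr0mem
    set D := ∑ i, t i * ‖w i‖^2 with hDdef
    have hDden : D = den / mtot := by
      rw [hDdef]
      have h1 : ∀ i, t i * ‖w i‖^2 = t i * dist (vv i) b^2 := fun i => by
        rw [hreal.1 i, dist_comm]
      rw [Finset.sum_congr rfl fun i _ => h1 i, keyq b, ← hden']
    have hDpos : 0 < D := by
      rw [hDden]
      exact div_pos hdenpos hmtot0
    have hwnum : ‖∑ i, t i • w i‖^2 < (deltaConfig b vv t + ε') * D := by
      have h2 : ‖∑ i, t i • w i‖^2 = r0 * D := by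
        rw [hr0, div_mul_cancel₀ _ (ne_of_gt hDpos)]
      rw [h2]
      exact mul_lt_mul_of_pos_right hr0lt hDpos
    set W : V → EuclideanSpace ℝ (Fin N) := fun v => w (idx v) with hWdef
    set B : EuclideanSpace ℝ (Fin N) := ∑ v, (m1 v / mtot) • W v with hBdef
    have hBw : B = ∑ i, t i • w i := by
      rw [hBdef, ← Finset.sum_fiberwise Finset.univ idx (fun v => (m1 v / mtot) • W v)]
      refine Finset.sum_congr rfl fun i _ => ?_
      have h3 : ∀ v ∈ Finset.univ.filter (fun v => idx v = i),
          (m1 v / mtot) • W v = (m1 v / mtot) • w i := by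
        intro v hv
        rw [hWdef]
        simp only
        rw [(Finset.mem_filter.1 hv).2]
      rw [Finset.sum_congr rfl h3, ← Finset.sum_smul]
      simp only [htdef]
      rw [← Finset.sum_div]
    -- coordinatewise spectral gap
    have key_k : ∀ k : Fin N, μ * (∑ v, m1 v * (W v k - B k)^2) ≤
        (1:ℝ)/2 * ∑ u, ∑ u', m2 u u' * (W u k - W u' k)^2 := by
      intro k
      have hBk : B k = ∑ v, m1 v / mtot * W v k := by
        rw [hBdef, pilp_sum_apply]
        exact Finset.sum_congr rfl fun v _ => by rw [PiLp.smul_apply, smul_eq_mul]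
      by_cases hconst : ∃ a b, W a k ≠ W b k
      · have hmean : ∑ u', (m1 u' / ∑ u'', m1 u'') * W u' k = B k := by
          rw [hBk, ← hmtot]
        set denk := ∑ v, m1 v * (W v k - ∑ u', (m1 u' / ∑ u'', m1 u'') * W u' k)^2 with hdenk
        have hdenknn : ∀ v : V, 0 ≤ m1 v * (W v k - ∑ u', (m1 u' / ∑ u'', m1 u'') * W u' k)^2 :=
          fun v => mul_nonneg (hpos v).le (sq_nonneg _)
        have hdenkpos : 0 < denk := by
          rcases eq_or_lt_of_le (Finset.sum_nonneg fun v _ => hdenknn v) with h0 | h0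
          · exfalso
            have hall := (Finset.sum_eq_zero_iff_of_nonneg fun v _ => hdenknn v).1 h0.symm
            obtain ⟨a1, b1, hne1⟩ := hconst
            have hval : ∀ v : V, W v k = ∑ u', (m1 u' / ∑ u'', m1 u'') * W u' k := by
              intro v
              have := hall v (Finset.mem_univ v)
              rcases mul_eq_zero.1 this with h | h
              · exact absurd h (ne_of_gt (hpos v))
              · have := pow_eq_zero_iff (n := 2) (by norm_num) |>.1 h
                linarith [this]
            exact hne1 ((hval a1).trans (hval b1).symm)
          · exact h0
        have hmem : ((1 : ℝ) / 2 * ∑ u, ∑ u', m2 u u' * (W u k - W u' k) ^ 2) / denk ∈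
            {r : ℝ | ∃ f : V → ℝ, (∃ a b, f a ≠ f b) ∧
              r = ((1 : ℝ) / 2 * ∑ u, ∑ u', m2 u u' * (f u - f u') ^ 2) /
                (∑ u, m1 u * (f u - ∑ u', (m1 u' / ∑ u'', m1 u'') * f u') ^ 2)} :=
          ⟨fun v => W v k, hconst, rfl⟩
        have hq : μ ≤ ((1 : ℝ) / 2 * ∑ u, ∑ u', m2 u u' * (W u k - W u' k) ^ 2) / denk :=
          csInf_le hμbdd hmem
        have hq2 : μ * denk ≤ (1 : ℝ) / 2 * ∑ u, ∑ u', m2 u u' * (W u k - W u' k) ^ 2 :=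
          (le_div_iff₀ hdenkpos).1 hq
        have heq : ∑ v, m1 v * (W v k - B k)^2 = denk := by
          rw [hdenk]
          exact Finset.sum_congr rfl fun v _ => by rw [hmean]
        rw [heq]
        exact hq2
      · push_neg at hconst
        have hBk2 : B k = W a0 k := by
          rw [hBk]
          have : ∀ v : V, m1 v / mtot * W v k = m1 v / mtot * W a0 k := fun v => by
            rw [hconst v a0]
          rw [Finset.sum_congr rfl fun v _ => this v, ← Finset.sum_mul, hwt1x]
          ring
        have hzero : ∑ v, m1 v * (W v k - B k)^2 = 0 := by
          apply Finset.sum_eq_zero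
          intro v _
          rw [hBk2, hconst v a0]
          ring
        rw [hzero, mul_zero]
        apply mul_nonneg (by norm_num)
        exact Finset.sum_nonneg fun u _ => Finset.sum_nonneg fun u' _ =>
          mul_nonneg (hnn u u') (sq_nonneg _)
    -- sum over coordinates
    have hsumk := Finset.sum_le_sum (fun k (_ : k ∈ Finset.univ) => key_k k)
    have hL : ∑ k, μ * (∑ v, m1 v * (W v k - B k)^2) = μ * ∑ v, m1 v * ‖W v - B‖^2 := by
      rw [← Finset.mul_sum, Finset.sum_comm]
      congr 1
      refine Finset.sum_congr rfl fun v _ => ?_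
      rw [← Finset.mul_sum, euclidean_norm_sq]
      try congr 1
      try exact Finset.sum_congr rfl fun k _ => by rw [PiLp.sub_apply]
    have hR : ∑ k, ((1:ℝ)/2 * ∑ u, ∑ u', m2 u u' * (W u k - W u' k)^2) =
        (1:ℝ)/2 * ∑ u, ∑ u', m2 u u' * ‖W u - W u'‖^2 := by
      rw [← Finset.mul_sum]
      congr 1
      rw [Finset.sum_comm]
      refine Finset.sum_congr rfl fun u _ => ?_
      rw [Finset.sum_comm]
      refine Finset.sum_congr rfl fun u' _ => ?_
      rw [← Finset.mul_sum, euclidean_norm_sq]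
      try congr 1
      try exact Finset.sum_congr rfl fun k _ => by rw [PiLp.sub_apply]
    rw [hL, hR] at hsumk
    have hnum_ge : (1:ℝ)/2 * ∑ u, ∑ u', m2 u u' * ‖W u - W u'‖^2 ≤ num := by
      rw [hnumdef]
      have hterm : ∀ u u' : V, m2 u u' * ‖W u - W u'‖^2 ≤ m2 u u' * dist (φ u) (φ u')^2 := by
        intro u u'
        apply mul_le_mul_of_nonneg_left _ (hnn u u')
        apply pow_le_pow_left₀ (norm_nonneg _)
        have h4 := hreal.2 (idx u) (idx u')
        rwa [hidx u, hidx u'] at h4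
      apply mul_le_mul_of_nonneg_left _ (by norm_num : (0:ℝ) ≤ 1/2)
      exact Finset.sum_le_sum fun u _ => Finset.sum_le_sum fun u' _ => hterm u u'
    -- variance identity
    have hsWB : ∑ v, m1 v • W v = mtot • B := by
      rw [hBdef, Finset.smul_sum]
      refine Finset.sum_congr rfl fun v _ => ?_
      rw [smul_smul, mul_div_cancel₀ _ (ne_of_gt hmtot0)]
    have hinner : ∑ v, m1 v * (inner ℝ (W v) B : ℝ) = mtot * ‖B‖^2 := by
      have h5 : ∑ v, (inner ℝ (m1 v • W v) B : ℝ) = (inner ℝ (∑ v, m1 v • W v) B : ℝ) :=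
        (sum_inner _ _ B).symm
      have h6 : ∀ v : V, (inner ℝ (m1 v • W v) B : ℝ) = m1 v * (inner ℝ (W v) B : ℝ) :=
        fun v => real_inner_smul_left _ _ _
      rw [Finset.sum_congr rfl fun v _ => (h6 v).symm, h5, hsWB, real_inner_smul_left,
        real_inner_self_eq_norm_sq]
    have hvar : ∑ v, m1 v * ‖W v - B‖^2 = ∑ v, m1 v * ‖W v‖^2 - mtot * ‖B‖^2 := by
      have h7 : ∀ v : V, m1 v * ‖W v - B‖^2 =
          m1 v * ‖W v‖^2 - 2*(m1 v * (inner ℝ (W v) B : ℝ)) + m1 v * ‖B‖^2 := by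
        intro v
        rw [norm_sub_sq_real]
        ring
      rw [Finset.sum_congr rfl fun v _ => h7 v, Finset.sum_add_distrib,
        Finset.sum_sub_distrib, ← Finset.mul_sum, ← Finset.sum_mul, hinner, ← hmtot]
      ring
    have hWnorm : ∑ v, m1 v * ‖W v‖^2 = den := by
      rw [hden']
      refine Finset.sum_congr rfl fun v _ => ?_
      rw [hWdef]
      simp only
      rw [hreal.1 (idx v), hidx v, dist_comm]
    have hBnorm : mtot * ‖B‖^2 < (deltaTotal T + ε') * den := by
      have h8 : ‖B‖^2 < (deltaConfig b vv t + ε') * D := by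
        rw [hBw]
        exact hwnum
      have h9 : (deltaConfig b vv t + ε') * D ≤ (deltaTotal T + ε') * D :=
        mul_le_mul_of_nonneg_right (by linarith [hδle]) hDpos.le
      have h10 : mtot * ‖B‖^2 < mtot * ((deltaTotal T + ε') * D) :=
        mul_lt_mul_of_pos_left (lt_of_lt_of_le h8 h9) hmtot0
      calc mtot * ‖B‖^2 < mtot * ((deltaTotal T + ε') * D) := h10
        _ = (deltaTotal T + ε') * den := by
            rw [hDden]
            field_simp
    -- chain everything
    have h11 : μ * (den - (deltaTotal T + ε') * den) ≤ num := by
      have h12 : den - (deltaTotal T + ε') * den ≤ ∑ v, m1 v * ‖W v - B‖^2 := by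
        rw [hvar, hWnorm]
        linarith [hBnorm]
      calc μ * (den - (deltaTotal T + ε') * den) ≤ μ * ∑ v, m1 v * ‖W v - B‖^2 :=
            mul_le_mul_of_nonneg_left h12 hμ0
        _ ≤ (1:ℝ)/2 * ∑ u, ∑ u', m2 u u' * ‖W u - W u'‖^2 := hsumk
        _ ≤ num := hnum_ge
    have h13 : μ * den * ε' ≤ ε0 := by
      rw [hε'def, show μ * den * (ε0 / (μ * den + 1)) = (μ * den * ε0) / (μ * den + 1) by ring,
        div_le_iff₀ (by positivity)]
      nlinarith [hμden, hε0.le]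
    have efin : (1 - deltaTotal T) * μ * den =
        μ * (den - (deltaTotal T + ε') * den) + μ * den * ε' := by ring
    linarith [h11, h13, efin]
  have hmain : (1 - deltaTotal T) * mu1Graph m1 m2 * den ≤ num :=
    le_of_forall_pos_le_add key
  rw [le_div_iff₀ hdenpos]
  exact hmain


/-- Estimate of Wang's invariant:
`(1 − δ(T)) μ₁(L) ≤ λ₁(L,T) ≤ μ₁(L)`, with equality `λ₁ = μ₁` when `δ(T) = 0`. -/
theorem stmt11 {V : Type*} [Fintype V] (m1 : V → ℝ) (m2 : V → V → ℝ)
    (hsymm : ∀ y y', m2 y y' = m2 y' y) (hnn : ∀ y y', 0 ≤ m2 y y')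
    (hdiag : ∀ y, m2 y y = 0)
    (hadm : ∀ y, m1 y = ∑ y', m2 y y') (hpos : ∀ y, 0 < m1 y)
    (T : Type*) [MetricSpace T] [HadamardSpace T] (hT : ∃ x y : T, x ≠ y) :
    (1 - deltaTotal T) * mu1Graph m1 m2 ≤ lambda1Graph m1 m2 T ∧
    lambda1Graph m1 m2 T ≤ mu1Graph m1 m2 ∧
    (deltaTotal T = 0 → lambda1Graph m1 m2 T = mu1Graph m1 m2) := by
  classical
  by_cases hV : ∃ a b : V, a ≠ b
  · obtain ⟨x, y, hxy⟩ := hT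
    obtain ⟨a0, b0, hab0⟩ := hV
    have hμlb : ∀ r ∈ {r : ℝ | ∃ f : V → ℝ, (∃ y y', f y ≠ f y') ∧
        r = ((1 : ℝ) / 2 * ∑ y, ∑ y', m2 y y' * (f y - f y') ^ 2) /
            (∑ y, m1 y * (f y - ∑ y', (m1 y' / ∑ y'', m1 y'') * f y') ^ 2)}, (0:ℝ) ≤ r := by
      rintro r ⟨f, _, rfl⟩
      apply div_nonneg
      · apply mul_nonneg (by norm_num)
        exact Finset.sum_nonneg fun u _ => Finset.sum_nonneg fun u' _ =>
          mul_nonneg (hnn u u') (sq_nonneg _)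
      · exact Finset.sum_nonneg fun u _ => mul_nonneg (hpos u).le (sq_nonneg _)
    have hμb : BddBelow {r : ℝ | ∃ f : V → ℝ, (∃ y y', f y ≠ f y') ∧
        r = ((1 : ℝ) / 2 * ∑ y, ∑ y', m2 y y' * (f y - f y') ^ 2) /
            (∑ y, m1 y * (f y - ∑ y', (m1 y' / ∑ y'', m1 y'') * f y') ^ 2)} := ⟨0, hμlb⟩
    have hμ0 : 0 ≤ mu1Graph m1 m2 := Real.sInf_nonneg hμlb
    have hLb : BddBelow {r : ℝ | ∃ φ : V → T, (∃ y y', φ y ≠ φ y') ∧ ∃ b : T,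
        IsWBarycenter b φ (fun y => m1 y / ∑ y', m1 y') ∧
        r = ((1 : ℝ) / 2 * ∑ y, ∑ y', m2 y y' * dist (φ y) (φ y') ^ 2) /
            (∑ y, m1 y * dist b (φ y) ^ 2)} := by
      refine ⟨0, ?_⟩
      rintro r ⟨φ, _, b, _, rfl⟩
      apply div_nonneg
      · apply mul_nonneg (by norm_num)
        exact Finset.sum_nonneg fun u _ => Finset.sum_nonneg fun u' _ =>
          mul_nonneg (hnn u u') (sq_nonneg _)
      · exact Finset.sum_nonneg fun u _ => mul_nonneg (hpos u).le (sq_nonneg _)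
    have hf0 : ∃ a b : V, (fun v => if v = a0 then (1:ℝ) else 0) a ≠
        (fun v => if v = a0 then (1:ℝ) else 0) b := by
      refine ⟨a0, b0, ?_⟩
      simp [Ne.symm hab0]
    have hμne : Set.Nonempty {r : ℝ | ∃ f : V → ℝ, (∃ y y', f y ≠ f y') ∧
        r = ((1 : ℝ) / 2 * ∑ y, ∑ y', m2 y y' * (f y - f y') ^ 2) /
            (∑ y, m1 y * (f y - ∑ y', (m1 y' / ∑ y'', m1 y'') * f y') ^ 2)} :=
      ⟨_, (fun v => if v = a0 then (1:ℝ) else 0), hf0, rfl⟩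
    have hpart2 : ∀ r ∈ {r : ℝ | ∃ f : V → ℝ, (∃ y y', f y ≠ f y') ∧
        r = ((1 : ℝ) / 2 * ∑ y, ∑ y', m2 y y' * (f y - f y') ^ 2) /
            (∑ y, m1 y * (f y - ∑ y', (m1 y' / ∑ y'', m1 y'') * f y') ^ 2)},
        lambda1Graph m1 m2 T ≤ r := by
      rintro r ⟨f, hf, rfl⟩
      obtain ⟨φ, hφ, bb, hb, heq⟩ := part2_aux m1 m2 hpos hxy f hf
      calc lambda1Graph m1 m2 T ≤
          ((1:ℝ)/2 * ∑ u, ∑ u', m2 u u' * dist (φ u) (φ u') ^ 2) /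
            (∑ u, m1 u * dist bb (φ u) ^ 2) := csInf_le hLb ⟨φ, hφ, bb, hb, rfl⟩
        _ = _ := heq
    have part2 : lambda1Graph m1 m2 T ≤ mu1Graph m1 m2 := le_csInf hμne hpart2
    have hLne : Set.Nonempty {r : ℝ | ∃ φ : V → T, (∃ y y', φ y ≠ φ y') ∧ ∃ b : T,
        IsWBarycenter b φ (fun y => m1 y / ∑ y', m1 y') ∧
        r = ((1 : ℝ) / 2 * ∑ y, ∑ y', m2 y y' * dist (φ y) (φ y') ^ 2) /
            (∑ y, m1 y * dist b (φ y) ^ 2)} := by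
      obtain ⟨φ, hφ, bb, hb, heq⟩ := part2_aux m1 m2 hpos hxy _ hf0
      exact ⟨_, φ, hφ, bb, hb, rfl⟩
    have part1 : (1 - deltaTotal T) * mu1Graph m1 m2 ≤ lambda1Graph m1 m2 T := by
      refine le_csInf hLne ?_
      rintro r ⟨φ, hφ, bb, hb, rfl⟩
      exact part1_aux m1 m2 hnn hpos hμ0 hμb φ hφ bb hb
    refine ⟨part1, part2, fun h0 => ?_⟩
    rw [h0, sub_zero, one_mul] at part1
    exact le_antisymm part2 part1
  · push_neg at hV
    have hμeq : mu1Graph m1 m2 = 0 := by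
      have he : {r : ℝ | ∃ f : V → ℝ, (∃ y y', f y ≠ f y') ∧
          r = ((1 : ℝ) / 2 * ∑ y, ∑ y', m2 y y' * (f y - f y') ^ 2) /
              (∑ y, m1 y * (f y - ∑ y', (m1 y' / ∑ y'', m1 y'') * f y') ^ 2)} = ∅ := by
        refine Set.eq_empty_iff_forall_notMem.2 ?_
        rintro r ⟨f, ⟨a, b, hfab⟩, _⟩
        exact hfab (by rw [hV a b])
      show sInf _ = 0
      rw [he, Real.sInf_empty]
    have hLeq : lambda1Graph m1 m2 T = 0 := by
      have he : {r : ℝ | ∃ φ : V → T, (∃ y y', φ y ≠ φ y') ∧ ∃ b : T,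
          IsWBarycenter b φ (fun y => m1 y / ∑ y', m1 y') ∧
          r = ((1 : ℝ) / 2 * ∑ y, ∑ y', m2 y y' * dist (φ y) (φ y') ^ 2) /
              (∑ y, m1 y * dist b (φ y) ^ 2)} = ∅ := by
        refine Set.eq_empty_iff_forall_notMem.2 ?_
        rintro r ⟨φ, ⟨a, b, hfab⟩, _⟩
        exact hfab (by rw [hV a b])
      show sInf _ = 0
      rw [he, Real.sInf_empty]
    rw [hμeq, hLeq]
    norm_num
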